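/- Let f : [0,∞) → [1,∞) be non-decreasing with f(x) → ∞ as x → ∞. Define g(x) = x · inf_{y ∈ [0,x]} (f(y)/y) (with f(y)/y interpreted as +∞ at y = 0). Then g(x) ≤ f(x) for all x > 0, the map x ↦ x·g(1/x) is non-decreasing on (0,∞), and g(x) → ∞ as x → ∞. -/

import Mathlib

open Filter

/-- If `f : [0,∞) → [1,∞)` is nondecreasing with `f → ∞`, and
`g x = x · inf_{y ∈ (0,x]} f(y)/y` (the value at `y = 0` being `+∞`), then
`g ≤ f` on `(0,∞)`, `x ↦ x g(1/x)` is nondecreasing on `(0,∞)`, and `g → ∞`. -/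
theorem stmt2 (f g : ℝ → ℝ)
    (hf1 : ∀ x, 0 ≤ x → 1 ≤ f x)
    (hmono : MonotoneOn f (Set.Ici 0))
    (hftop : Tendsto f atTop atTop)
    (hg : ∀ x : ℝ, g x = x * sInf ((fun y => f y / y) '' Set.Ioc 0 x)) :
    (∀ x : ℝ, 0 < x → g x ≤ f x) ∧
    (∀ x y : ℝ, 0 < x → x ≤ y → x * g (1/x) ≤ y * g (1/y)) ∧
    Tendsto g atTop atTop := by
  have hbdd : ∀ x : ℝ, BddBelow ((fun y => f y / y) '' Set.Ioc 0 x) := by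
    intro x
    refine ⟨0, ?_⟩
    rintro z ⟨y, hy, rfl⟩
    exact div_nonneg (le_trans zero_le_one (hf1 y hy.1.le)) hy.1.le
  have hne : ∀ x : ℝ, 0 < x → ((fun y => f y / y) '' Set.Ioc 0 x).Nonempty :=
    fun x hx => ⟨f x / x, x, ⟨hx, le_refl x⟩, rfl⟩
  refine ⟨?_, ?_, ?_⟩
  · intro x hx
    rw [hg]
    calc x * sInf ((fun y => f y / y) '' Set.Ioc 0 x) ≤ x * (f x / x) :=
          mul_le_mul_of_nonneg_left (csInf_le (hbdd x) ⟨x, ⟨hx, le_refl x⟩, rfl⟩) hx.le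
      _ = f x := by field_simp
  · intro x y hx hxy
    have hy : 0 < y := lt_of_lt_of_le hx hxy
    rw [hg, hg]
    rw [← mul_assoc, ← mul_assoc, mul_one_div_cancel hx.ne', mul_one_div_cancel hy.ne',
      one_mul, one_mul]
    exact csInf_le_csInf (hbdd _) (hne _ (by positivity))
      (Set.image_mono (Set.Ioc_subset_Ioc_right (one_div_le_one_div_of_le hx hxy)))
  · rw [tendsto_atTop]
    intro M
    set M' := max M 1 with hM'
    have hM'1 : (1 : ℝ) ≤ M' := le_max_right _ _
    have hM'0 : (0 : ℝ) < M' := lt_of_lt_of_le one_pos hM'1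
    obtain ⟨N, hN⟩ := eventually_atTop.mp (hftop.eventually (eventually_ge_atTop M'))
    set N₀ := max N 1 with hN₀
    have hN₀1 : (1 : ℝ) ≤ N₀ := le_max_right _ _
    rw [eventually_atTop]
    refine ⟨M' * N₀, fun x hx => ?_⟩
    have hx0 : 0 < x := lt_of_lt_of_le (by nlinarith) hx
    have hlow : M' / x ≤ sInf ((fun y => f y / y) '' Set.Ioc 0 x) := by
      apply le_csInf (hne x hx0)
      rintro z ⟨y, hy, rfl⟩
      have hy0 : 0 < y := hy.1
      rcases le_or_gt y (x / M') with h | h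
      · have h2 : y * M' ≤ x := (le_div_iff₀ hM'0).mp h
        have h1 : M' / x ≤ 1 / y := by
          rw [div_le_div_iff₀ hx0 hy0]
          nlinarith
        calc M' / x ≤ 1 / y := h1
          _ ≤ f y / y := by gcongr; exact hf1 y hy0.le
      · have hyN : N ≤ y := by
          have : N₀ ≤ x / M' := (le_div_iff₀ hM'0).mpr (by nlinarith)
          linarith [le_max_left N 1, this, h.le]
        have hyx : y ≤ x := hy.2
        calc M' / x ≤ M' / y := by gcongr
          _ ≤ f y / y := by gcongr; exact hN y hyN
    calc M ≤ M' := le_max_left _ _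
      _ = x * (M' / x) := by field_simp
      _ ≤ g x := by rw [hg]; exact mul_le_mul_of_nonneg_left hlow hx0.le
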